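/- arXiv:1811.07177 — 9 statements merged into one kernel-verified Lean document; each statement's English description precedes it below -/
import Mathlib

section
/- In a conjugation semigroup satisfying axioms (1)-(3), the quasi-identity $x+\overline{a}+a = y+\overline{a}+a \Rightarrow x = y$ (for all $x,y,a$) holds if and only if the semigroup is cancellative (both left and right cancellative). -/
theorem conj_semigroup_quasi_identity_iff_cancellative {S : Type*} [AddSemigroup S]
    (conj : S → S)
    (h1 : ∀ x : S, conj x + x = x + conj x)
    (h2 : ∀ x y : S, x + conj y + y = y + conj y + x)
    (h3 : ∀ x y : S, conj (x + y) = conj y + conj x) :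
    (∀ x y a : S, x + conj a + a = y + conj a + a → x = y) ↔
      ((∀ a x y : S, a + x = a + y → x = y) ∧ (∀ a x y : S, x + a = y + a → x = y)) := by
  constructor
  · intro Q
    constructor
    · intro a x y h
      apply Q x y a
      calc x + conj a + a = a + conj a + x := h2 x a
        _ = conj a + a + x := by rw [h1]
        _ = conj a + (a + x) := add_assoc _ _ _
        _ = conj a + (a + y) := by rw [h]
        _ = conj a + a + y := (add_assoc _ _ _).symm
        _ = a + conj a + y := by rw [h1]
        _ = y + conj a + a := (h2 y a).symm
    · intro a x y h
      apply Q x y a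
      calc x + conj a + a = x + (conj a + a) := add_assoc _ _ _
        _ = x + (a + conj a) := by rw [h1]
        _ = x + a + conj a := (add_assoc _ _ _).symm
        _ = y + a + conj a := by rw [h]
        _ = y + (a + conj a) := add_assoc _ _ _
        _ = y + (conj a + a) := by rw [h1]
        _ = y + conj a + a := (add_assoc _ _ _).symm
  · rintro ⟨_, hr⟩ x y a h
    exact hr _ _ _ (hr _ _ _ h)
end

section
/- Every cancellative conjugation semigroup embeds into a group, i.e., there is an injective semigroup homomorphism from $S$ into some group. -/
namespace ConjEmbed

variable {S : Type} [AddSemigroup S]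

/-- `cc conj x = x + conj x`, a central element. -/
def cc (conj : S → S) (x : S) : S := x + conj x

section
variable (conj : S → S)

theorem central (h1 : ∀ x : S, conj x + x = x + conj x)
    (h2 : ∀ x y : S, x + conj y + y = y + conj y + x)
    (x y : S) : x + cc conj y = cc conj y + x := by
  show x + (y + conj y) = (y + conj y) + x
  calc x + (y + conj y) = x + (conj y + y) := by rw [h1]
    _ = x + conj y + y := (add_assoc _ _ _).symm
    _ = y + conj y + x := h2 x y

theorem ccomm (h1 : ∀ x : S, conj x + x = x + conj x)
    (h2 : ∀ x y : S, x + conj y + y = y + conj y + x)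
    (a b : S) : cc conj a + cc conj b = cc conj b + cc conj a :=
  central conj h1 h2 (cc conj a) b

/-- pull a central element `cc conj a` to the right past `v`. -/
theorem pullc (h1 : ∀ x : S, conj x + x = x + conj x)
    (h2 : ∀ x y : S, x + conj y + y = y + conj y + x)
    (u v a : S) : u + cc conj a + v = u + v + cc conj a := by
  rw [add_assoc, ← central conj h1 h2 v a, ← add_assoc]

theorem swapc (h1 : ∀ x : S, conj x + x = x + conj x)
    (h2 : ∀ x y : S, x + conj y + y = y + conj y + x)
    (u a b : S) : u + cc conj a + cc conj b = u + cc conj b + cc conj a := by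
  rw [add_assoc, ccomm conj h1 h2 a b, ← add_assoc]

theorem chom (h1 : ∀ x : S, conj x + x = x + conj x)
    (h2 : ∀ x y : S, x + conj y + y = y + conj y + x)
    (h3 : ∀ x y : S, conj (x + y) = conj y + conj x)
    (x y : S) : cc conj (x + y) = cc conj x + cc conj y := by
  show (x + y) + conj (x + y) = cc conj x + cc conj y
  rw [h3]
  calc x + y + (conj y + conj x)
      = x + (y + conj y) + conj x := by simp only [add_assoc]
    _ = x + cc conj y + conj x := rfl
    _ = cc conj y + x + conj x := by rw [central conj h1 h2]
    _ = cc conj y + (x + conj x) := add_assoc _ _ _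
    _ = cc conj y + cc conj x := rfl
    _ = cc conj x + cc conj y := ccomm conj h1 h2 _ _

theorem four (h1 : ∀ x : S, conj x + x = x + conj x)
    (h2 : ∀ x y : S, x + conj y + y = y + conj y + x)
    (a b c d : S) :
    cc conj a + cc conj b + cc conj c + cc conj d
      = cc conj d + cc conj c + cc conj b + cc conj a := by
  calc cc conj a + cc conj b + cc conj c + cc conj d
      = cc conj a + cc conj b + cc conj d + cc conj c := swapc conj h1 h2 _ _ _
    _ = cc conj a + cc conj d + cc conj b + cc conj c := by
        rw [swapc conj h1 h2 (cc conj a) b d]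
    _ = cc conj d + cc conj a + cc conj b + cc conj c := by
        rw [ccomm conj h1 h2 a d]
    _ = cc conj d + cc conj a + cc conj c + cc conj b := swapc conj h1 h2 _ _ _
    _ = cc conj d + cc conj c + cc conj a + cc conj b := by
        rw [swapc conj h1 h2 (cc conj d) a c]
    _ = cc conj d + cc conj c + cc conj b + cc conj a := swapc conj h1 h2 _ _ _

def grel (p q : S × S) : Prop := p.1 + cc conj q.2 = q.1 + cc conj p.2

def gsetoid (hrc : ∀ a x y : S, x + a = y + a → x = y)
    (h1 : ∀ x : S, conj x + x = x + conj x)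
    (h2 : ∀ x y : S, x + conj y + y = y + conj y + x) : Setoid (S × S) where
  r := grel conj
  iseqv := by
    refine ⟨fun p => rfl, fun h => Eq.symm h, ?_⟩
    intro p q r hpq hqr
    unfold grel at *
    apply hrc (cc conj q.2)
    calc p.1 + cc conj r.2 + cc conj q.2
        = p.1 + cc conj q.2 + cc conj r.2 := swapc conj h1 h2 _ _ _
      _ = q.1 + cc conj p.2 + cc conj r.2 := by rw [hpq]
      _ = q.1 + cc conj r.2 + cc conj p.2 := swapc conj h1 h2 _ _ _
      _ = r.1 + cc conj q.2 + cc conj p.2 := by rw [hqr]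
      _ = r.1 + cc conj p.2 + cc conj q.2 := swapc conj h1 h2 _ _ _

theorem add_wd (h1 : ∀ x : S, conj x + x = x + conj x)
    (h2 : ∀ x y : S, x + conj y + y = y + conj y + x)
    (h3 : ∀ x y : S, conj (x + y) = conj y + conj x) :
    ∀ p₁ p₂ : S × S, grel conj p₁ p₂ → ∀ q₁ q₂ : S × S, grel conj q₁ q₂ →
    grel conj (p₁.1 + q₁.1, p₁.2 + q₁.2) (p₂.1 + q₂.1, p₂.2 + q₂.2) := by
  rintro ⟨a1, a2⟩ ⟨b1, b2⟩ hab ⟨c1, c2⟩ ⟨d1, d2⟩ hcd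
  unfold grel at *
  simp only at *
  rw [chom conj h1 h2 h3, chom conj h1 h2 h3]
  calc a1 + c1 + (cc conj b2 + cc conj d2)
      = a1 + c1 + cc conj b2 + cc conj d2 := (add_assoc _ _ _).symm
    _ = a1 + cc conj b2 + c1 + cc conj d2 := by
        rw [pullc conj h1 h2 a1 c1 b2]
    _ = b1 + cc conj a2 + c1 + cc conj d2 := by rw [hab]
    _ = b1 + cc conj a2 + (c1 + cc conj d2) := add_assoc _ _ _
    _ = b1 + cc conj a2 + (d1 + cc conj c2) := by rw [hcd]
    _ = b1 + cc conj a2 + d1 + cc conj c2 := (add_assoc _ _ _).symm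
    _ = b1 + d1 + cc conj a2 + cc conj c2 := by
        rw [pullc conj h1 h2 b1 d1 a2]
    _ = b1 + d1 + (cc conj a2 + cc conj c2) := add_assoc _ _ _

theorem neg_wd (hrc : ∀ a x y : S, x + a = y + a → x = y)
    (h1 : ∀ x : S, conj x + x = x + conj x)
    (h2 : ∀ x y : S, x + conj y + y = y + conj y + x) :
    ∀ p q : S × S, grel conj p q →
    grel conj (cc conj p.2 + conj p.1, p.1) (cc conj q.2 + conj q.1, q.1) := by
  rintro ⟨a1, a2⟩ ⟨b1, b2⟩ hab
  unfold grel at *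
  simp only at *
  apply hrc (a1 + cc conj b2)
  have hA : cc conj a2 + conj a1 + cc conj b1 + (a1 + cc conj b2)
      = cc conj a2 + cc conj a1 + cc conj b1 + cc conj b2 := by
    calc cc conj a2 + conj a1 + cc conj b1 + (a1 + cc conj b2)
        = cc conj a2 + conj a1 + cc conj b1 + a1 + cc conj b2 := (add_assoc _ _ _).symm
      _ = cc conj a2 + conj a1 + a1 + cc conj b1 + cc conj b2 := by
          rw [pullc conj h1 h2 (cc conj a2 + conj a1) a1 b1]
      _ = cc conj a2 + (conj a1 + a1) + cc conj b1 + cc conj b2 := by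
          rw [add_assoc (cc conj a2) (conj a1) a1]
      _ = cc conj a2 + cc conj a1 + cc conj b1 + cc conj b2 := by
          rw [h1 a1]; rfl
  have hB : cc conj b2 + conj b1 + cc conj a1 + (a1 + cc conj b2)
      = cc conj b2 + cc conj b1 + cc conj a1 + cc conj a2 := by
    rw [hab]
    calc cc conj b2 + conj b1 + cc conj a1 + (b1 + cc conj a2)
        = cc conj b2 + conj b1 + cc conj a1 + b1 + cc conj a2 := (add_assoc _ _ _).symm
      _ = cc conj b2 + conj b1 + b1 + cc conj a1 + cc conj a2 := by
          rw [pullc conj h1 h2 (cc conj b2 + conj b1) b1 a1]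
      _ = cc conj b2 + (conj b1 + b1) + cc conj a1 + cc conj a2 := by
          rw [add_assoc (cc conj b2) (conj b1) b1]
      _ = cc conj b2 + cc conj b1 + cc conj a1 + cc conj a2 := by
          rw [h1 b1]; rfl
  rw [hA, hB]
  exact four conj h1 h2 _ _ _ _

def ggroup (hrc : ∀ a x y : S, x + a = y + a → x = y)
    (h1 : ∀ x : S, conj x + x = x + conj x)
    (h2 : ∀ x y : S, x + conj y + y = y + conj y + x)
    (h3 : ∀ x y : S, conj (x + y) = conj y + conj x)
    (e : S) : AddGroup (Quotient (gsetoid conj hrc h1 h2)) :=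
  letI : Add (Quotient (gsetoid conj hrc h1 h2)) :=
    ⟨Quotient.map₂ (fun p q => (p.1 + q.1, p.2 + q.2)) (add_wd conj h1 h2 h3)⟩
  letI : Zero (Quotient (gsetoid conj hrc h1 h2)) :=
    ⟨Quotient.mk (gsetoid conj hrc h1 h2) (cc conj e, e)⟩
  letI : Neg (Quotient (gsetoid conj hrc h1 h2)) :=
    ⟨Quotient.map (fun p => (cc conj p.2 + conj p.1, p.1)) (neg_wd conj hrc h1 h2)⟩
  { add := (· + ·)
    zero := 0
    neg := Neg.neg
    nsmul := nsmulRec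
    zsmul := zsmulRec
    add_assoc := by
      refine fun a b c => Quotient.inductionOn₃ a b c fun p q r => ?_
      apply Quotient.sound
      show grel conj _ _
      unfold grel
      simp only [add_assoc]
    zero_add := by
      refine fun a => Quotient.inductionOn a fun p => ?_
      apply Quotient.sound
      show grel conj (cc conj e + p.1, e + p.2) p
      unfold grel
      calc cc conj e + p.1 + cc conj p.2
          = p.1 + cc conj e + cc conj p.2 := by rw [← central conj h1 h2 p.1 e]
        _ = p.1 + (cc conj e + cc conj p.2) := add_assoc _ _ _
        _ = p.1 + cc conj (e + p.2) := by rw [chom conj h1 h2 h3]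
    add_zero := by
      refine fun a => Quotient.inductionOn a fun p => ?_
      apply Quotient.sound
      show grel conj (p.1 + cc conj e, p.2 + e) p
      unfold grel
      calc p.1 + cc conj e + cc conj p.2
          = p.1 + (cc conj e + cc conj p.2) := add_assoc _ _ _
        _ = p.1 + (cc conj p.2 + cc conj e) := by rw [ccomm conj h1 h2 e p.2]
        _ = p.1 + cc conj (p.2 + e) := by rw [chom conj h1 h2 h3]
    neg_add_cancel := by
      refine fun a => Quotient.inductionOn a fun p => ?_
      apply Quotient.sound
      show grel conj (cc conj p.2 + conj p.1 + p.1, p.1 + p.2) (cc conj e, e)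
      unfold grel
      calc cc conj p.2 + conj p.1 + p.1 + cc conj e
          = cc conj p.2 + (conj p.1 + p.1) + cc conj e := by
            rw [add_assoc (cc conj p.2) (conj p.1) p.1]
        _ = cc conj p.2 + cc conj p.1 + cc conj e := by rw [h1 p.1]; rfl
        _ = cc conj e + (cc conj p.2 + cc conj p.1) := central conj h1 h2 _ e
        _ = cc conj e + (cc conj p.1 + cc conj p.2) := by rw [ccomm conj h1 h2 p.2 p.1]
        _ = cc conj e + cc conj (p.1 + p.2) := by rw [← chom conj h1 h2 h3 p.1 p.2] }

end
end ConjEmbed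

theorem cancellative_conj_semigroup_embeds_in_group {S : Type} [AddSemigroup S]
    (conj : S → S)
    (hlc : ∀ a x y : S, a + x = a + y → x = y)
    (hrc : ∀ a x y : S, x + a = y + a → x = y)
    (h1 : ∀ x : S, conj x + x = x + conj x)
    (h2 : ∀ x y : S, x + conj y + y = y + conj y + x)
    (h3 : ∀ x y : S, conj (x + y) = conj y + conj x) :
    ∃ (G : Type) (_ : AddGroup G) (φ : S → G),
      (∀ x y : S, φ (x + y) = φ x + φ y) ∧ Function.Injective φ := by
  rcases isEmpty_or_nonempty S with hS | ⟨⟨e⟩⟩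
  · exact ⟨ℤ, inferInstance, fun x => hS.elim x, fun x y => hS.elim x, fun x y h => hS.elim x⟩
  · refine ⟨Quotient (ConjEmbed.gsetoid conj hrc h1 h2),
      ConjEmbed.ggroup conj hrc h1 h2 h3 e,
      fun x => Quotient.mk (ConjEmbed.gsetoid conj hrc h1 h2) (x + ConjEmbed.cc conj e, e),
      ?_, ?_⟩
    · intro x y
      change Quotient.mk (ConjEmbed.gsetoid conj hrc h1 h2) (x + y + ConjEmbed.cc conj e, e)
        = Quotient.mk (ConjEmbed.gsetoid conj hrc h1 h2)
          ((x + ConjEmbed.cc conj e) + (y + ConjEmbed.cc conj e), e + e)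
      apply Quotient.sound
      show ConjEmbed.grel conj (x + y + ConjEmbed.cc conj e, e)
        ((x + ConjEmbed.cc conj e) + (y + ConjEmbed.cc conj e), e + e)
      unfold ConjEmbed.grel
      calc x + y + ConjEmbed.cc conj e + ConjEmbed.cc conj (e + e)
          = x + y + ConjEmbed.cc conj e + (ConjEmbed.cc conj e + ConjEmbed.cc conj e) := by
            rw [ConjEmbed.chom conj h1 h2 h3]
        _ = x + y + ConjEmbed.cc conj e + ConjEmbed.cc conj e + ConjEmbed.cc conj e :=
            (add_assoc _ _ _).symm
        _ = x + ConjEmbed.cc conj e + y + ConjEmbed.cc conj e + ConjEmbed.cc conj e := by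
            rw [← ConjEmbed.pullc conj h1 h2 x y e]
        _ = x + ConjEmbed.cc conj e + (y + ConjEmbed.cc conj e) + ConjEmbed.cc conj e := by
            rw [add_assoc (x + ConjEmbed.cc conj e) y (ConjEmbed.cc conj e)]
    · intro x y hxy
      have h := Quotient.exact hxy
      have h' : x + ConjEmbed.cc conj e + ConjEmbed.cc conj e
          = y + ConjEmbed.cc conj e + ConjEmbed.cc conj e := h
      exact hrc _ _ _ (hrc _ _ _ h')
end

section
/- Given a Schreier split epimorphism of monoids with Schreier retraction $q$, the identity $q(a+a') = q(a) + q(r(f(a)) + k(q(a')))$ holds for all $a, a' \in A$. -/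
theorem schreier_retraction_add {X A B : Type*} [AddMonoid X] [AddMonoid A] [AddMonoid B]
    (f : A → B) (r : B → A) (k : X → A) (q : A → X)
    (hfadd : ∀ a a' : A, f (a + a') = f a + f a') (hf0 : f 0 = 0)
    (hradd : ∀ b b' : B, r (b + b') = r b + r b') (hr0 : r 0 = 0)
    (hkadd : ∀ x x' : X, k (x + x') = k x + k x') (hk0 : k 0 = 0)
    (hfr : ∀ b : B, f (r b) = b)
    (hkinj : Function.Injective k)
    (hker : ∀ x : X, f (k x) = 0)
    (hker' : ∀ a : A, f a = 0 → ∃ x : X, k x = a)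
    (hq1 : ∀ a : A, a = k (q a) + r (f a))
    (hq2 : ∀ (x : X) (b : B), x = q (k x + r b)) :
    ∀ a a' : A, q (a + a') = q a + q (r (f a) + k (q a')) := by
  intro a a'
  set u := r (f a) + k (q a') with hu
  have hfu : f u = f a := by
    rw [hu, hfadd, hfr, hker, add_zero]
  have hdecomp : a + a' = k (q a + q u) + r (f (a + a')) := by
    conv_lhs => rw [hq1 a, hq1 a']
    rw [hkadd, hfadd]
    have : u = k (q u) + r (f a) := by rw [← hfu]; exact hq1 u
    calc k (q a) + r (f a) + (k (q a') + r (f a'))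
        = k (q a) + (r (f a) + k (q a')) + r (f a') := by
          simp [add_assoc]
      _ = k (q a) + u + r (f a') := by rw [← hu]
      _ = k (q a) + (k (q u) + r (f a)) + r (f a') := by rw [← this]
      _ = k (q a) + k (q u) + (r (f a) + r (f a')) := by simp [add_assoc]
      _ = k (q a) + k (q u) + r (f a + f a') := by rw [hradd]
  rw [hdecomp, ← hq2]
end

section
/- Given a Schreier split epimorphism in the category of cancellative conjugation monoids, with Schreier retraction $q$ and induced action $b\cdot x := q(r(b)+k(x))$, the identity $q(\overline{a}) = f(\overline{a})\cdot \overline{q(a)}$ holds for all $a \in A$. -/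
theorem schreier_retraction_conjugation
    {X A B : Type*} [AddCancelMonoid X] [AddCancelMonoid A] [AddCancelMonoid B]
    (cX : X → X) (cA : A → A) (cB : B → B)
    (hX1 : ∀ x : X, cX x + x = x + cX x)
    (hX2 : ∀ x y : X, x + cX y + y = y + cX y + x)
    (hX3 : ∀ x y : X, cX (x + y) = cX y + cX x)
    (hA1 : ∀ a : A, cA a + a = a + cA a)
    (hA2 : ∀ a a' : A, a + cA a' + a' = a' + cA a' + a)
    (hA3 : ∀ a a' : A, cA (a + a') = cA a' + cA a)
    (hB1 : ∀ b : B, cB b + b = b + cB b)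
    (hB2 : ∀ b b' : B, b + cB b' + b' = b' + cB b' + b)
    (hB3 : ∀ b b' : B, cB (b + b') = cB b' + cB b)
    (f : A → B) (r : B → A) (k : X → A) (q : A → X)
    (hfadd : ∀ a a' : A, f (a + a') = f a + f a') (hf0 : f 0 = 0)
    (hfc : ∀ a : A, f (cA a) = cB (f a))
    (hradd : ∀ b b' : B, r (b + b') = r b + r b') (hr0 : r 0 = 0)
    (hrc : ∀ b : B, r (cB b) = cA (r b))
    (hkadd : ∀ x x' : X, k (x + x') = k x + k x') (hk0 : k 0 = 0)
    (hkc : ∀ x : X, k (cX x) = cA (k x))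
    (hfr : ∀ b : B, f (r b) = b)
    (hkinj : Function.Injective k)
    (hker : ∀ x : X, f (k x) = 0)
    (hker' : ∀ a : A, f a = 0 → ∃ x : X, k x = a)
    (hq1 : ∀ a : A, a = k (q a) + r (f a))
    (hq2 : ∀ (x : X) (b : B), x = q (k x + r b)) :
    ∀ a : A, q (cA a) = q (r (f (cA a)) + k (cX (q a))) := by
  intro a
  have h : cA a = r (f (cA a)) + k (cX (q a)) := by
    conv_lhs => rw [hq1 a]
    rw [hA3, hfc, hrc, hkc]
  rw [← h]
end

section
/- Let $X, B$ be cancellative conjugation monoids and $\varphi$ an action of $B$ on $X$ such that the semidirect product $X\rtimes_\varphi B$, equipped with $\overline{(x,b)}=(\overline{b}\cdot\overline{x},\overline{b})$, is a conjugation monoid. Then the conjugation axiom $\overline{s}+s = s+\overline{s}$ on $X\rtimes_\varphi B$ is equivalent to: $\overline{b}\cdot(\overline{x}+x) = x + (b+\overline{b})\cdot\overline{x}$ for all $b\in B$, $x\in X$. -/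
theorem semidirect_conjugation_axiom_one_iff
    {X B : Type*} [AddCancelMonoid X] [AddCancelMonoid B]
    (cX : X → X) (cB : B → B)
    (hX1 : ∀ x : X, cX x + x = x + cX x)
    (hX2 : ∀ x y : X, x + cX y + y = y + cX y + x)
    (hX3 : ∀ x y : X, cX (x + y) = cX y + cX x)
    (hB1 : ∀ b : B, cB b + b = b + cB b)
    (hB2 : ∀ b b' : B, b + cB b' + b' = b' + cB b' + b)
    (hB3 : ∀ b b' : B, cB (b + b') = cB b' + cB b)
    (φ : B → X → X)
    (hφadd : ∀ (b : B) (x y : X), φ b (x + y) = φ b x + φ b y)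
    (hφ0 : ∀ b : B, φ b 0 = 0)
    (hφid : ∀ x : X, φ 0 x = x)
    (hφcomp : ∀ (b b' : B) (x : X), φ (b + b') x = φ b (φ b' x)) :
    (∀ p : X × B,
        ((φ (cB p.2) (cX p.1) + φ (cB p.2) p.1, cB p.2 + p.2) : X × B) =
          (p.1 + φ p.2 (φ (cB p.2) (cX p.1)), p.2 + cB p.2)) ↔
      (∀ (b : B) (x : X), φ (cB b) (cX x + x) = x + φ (b + cB b) (cX x)) := by
  constructor
  · intro h b x
    have h1 := congrArg Prod.fst (h (x, b))
    simp only at h1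
    rw [hφadd, hφcomp]
    exact h1
  · intro h p
    obtain ⟨x, b⟩ := p
    have h1 := h b x
    rw [hφadd, hφcomp] at h1
    exact Prod.ext h1 (hB1 b)
end

section
/- Given a Schreier split epimorphism $f: A\to B$, $r: B\to A$, kernel $k: X\to A$, retraction $q$, in the category of cancellative conjugation monoids, and a morphism $h: X\to B$, there exists a conjugation-monoid homomorphism $\tilde h: A\to B$ with $\tilde h\circ k = h$ and $\tilde h\circ r = 1_B$ if and only if $h(b\cdot x)+b = b+h(x)$ for all $b\in B$, $x\in X$, where $b\cdot x = q(r(b)+k(x))$. In that case $\tilde h(a)=h(q(a))+f(a)$. -/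
theorem precrossed_semimodule_iff_reflexive_graph
    {X A B : Type*} [AddCancelMonoid X] [AddCancelMonoid A] [AddCancelMonoid B]
    (cX : X → X) (cA : A → A) (cB : B → B)
    (hX1 : ∀ x : X, cX x + x = x + cX x)
    (hX2 : ∀ x y : X, x + cX y + y = y + cX y + x)
    (hX3 : ∀ x y : X, cX (x + y) = cX y + cX x)
    (hA1 : ∀ a : A, cA a + a = a + cA a)
    (hA2 : ∀ a a' : A, a + cA a' + a' = a' + cA a' + a)
    (hA3 : ∀ a a' : A, cA (a + a') = cA a' + cA a)
    (hB1 : ∀ b : B, cB b + b = b + cB b)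
    (hB2 : ∀ b b' : B, b + cB b' + b' = b' + cB b' + b)
    (hB3 : ∀ b b' : B, cB (b + b') = cB b' + cB b)
    (f : A → B) (r : B → A) (k : X → A) (q : A → X)
    (hfadd : ∀ a a' : A, f (a + a') = f a + f a') (hf0 : f 0 = 0)
    (hfc : ∀ a : A, f (cA a) = cB (f a))
    (hradd : ∀ b b' : B, r (b + b') = r b + r b') (hr0 : r 0 = 0)
    (hrc : ∀ b : B, r (cB b) = cA (r b))
    (hkadd : ∀ x x' : X, k (x + x') = k x + k x') (hk0 : k 0 = 0)
    (hkc : ∀ x : X, k (cX x) = cA (k x))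
    (hfr : ∀ b : B, f (r b) = b)
    (hkinj : Function.Injective k)
    (hker : ∀ x : X, f (k x) = 0)
    (hker' : ∀ a : A, f a = 0 → ∃ x : X, k x = a)
    (hq1 : ∀ a : A, a = k (q a) + r (f a))
    (hq2 : ∀ (x : X) (b : B), x = q (k x + r b))
    (h : X → B)
    (hhadd : ∀ x x' : X, h (x + x') = h x + h x') (hh0 : h 0 = 0)
    (hhc : ∀ x : X, h (cX x) = cB (h x)) :
    ((∃ th : A → B,
        (∀ a a' : A, th (a + a') = th a + th a') ∧ th 0 = 0 ∧
        (∀ a : A, th (cA a) = cB (th a)) ∧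
        (∀ x : X, th (k x) = h x) ∧ (∀ b : B, th (r b) = b)) ↔
      (∀ (b : B) (x : X), h (q (r b + k x)) + b = b + h x)) ∧
    (∀ th : A → B,
      ((∀ a a' : A, th (a + a') = th a + th a') ∧ th 0 = 0 ∧
        (∀ a : A, th (cA a) = cB (th a)) ∧
        (∀ x : X, th (k x) = h x) ∧ (∀ b : B, th (r b) = b)) →
      ∀ a : A, th a = h (q a) + f a) := by
  have qk : ∀ x : X, q (k x) = x := by
    intro x
    have := hq2 x 0
    rw [hr0, add_zero] at this
    exact this.symm
  have qr : ∀ b : B, q (r b) = 0 := by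
    intro b
    have := hq2 0 b
    rw [hk0, zero_add] at this
    exact this.symm
  constructor
  · constructor
    · rintro ⟨th, thadd, th0, thc, thk, thr⟩ b x
      have e1 : r b + k x = k (q (r b + k x)) + r b := by
        have := hq1 (r b + k x)
        rw [hfadd, hfr, hker, add_zero] at this
        exact this
      calc h (q (r b + k x)) + b = th (k (q (r b + k x))) + th (r b) := by rw [thk, thr]
        _ = th (k (q (r b + k x)) + r b) := (thadd _ _).symm
        _ = th (r b + k x) := by rw [← e1]
        _ = b + h x := by rw [thadd, thr, thk]
    · intro C
      refine ⟨fun a => h (q a) + f a, ?_, ?_, ?_, ?_, ?_⟩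
      · intro a a'
        set y := q (r (f a) + k (q a')) with hy
        have e2 : r (f a) + k (q a') = k y + r (f a) := by
          have := hq1 (r (f a) + k (q a'))
          rw [hfadd, hfr, hker, add_zero] at this
          exact this
        have e3 : a + a' = k (q a + y) + r (f a + f a') := by
          conv_lhs => rw [hq1 a, hq1 a']
          rw [hkadd, hradd]
          simp only [add_assoc]
          congr 1
          rw [← add_assoc, ← add_assoc, e2]
        have e4 : q (a + a') = q a + y := by
          rw [e3]; exact (hq2 _ _).symm
        show h (q (a + a')) + f (a + a') = (h (q a) + f a) + (h (q a') + f a')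
        rw [e4, hhadd, hfadd]
        have C' : h y + f a = f a + h (q a') := C (f a) (q a')
        simp only [← add_assoc]
        congr 1
        rw [add_assoc, C', ← add_assoc]
      · show h (q 0) + f 0 = 0
        have q0 : q 0 = 0 := by have := qr 0; rwa [hr0] at this
        rw [q0, hh0, hf0, add_zero]
      · intro a
        have e5 : cA a = r (cB (f a)) + k (cX (q a)) := by
          conv_lhs => rw [hq1 a]
          rw [hA3, ← hrc, ← hkc]
        have e6 : r (cB (f a)) + k (cX (q a)) =
            k (q (r (cB (f a)) + k (cX (q a)))) + r (cB (f a)) := by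
          have := hq1 (r (cB (f a)) + k (cX (q a)))
          rw [hfadd, hfr, hker, add_zero] at this
          exact this
        show h (q (cA a)) + f (cA a) = cB (h (q a) + f a)
        rw [hfc, hB3, ← hhc]
        calc h (q (cA a)) + cB (f a)
            = h (q (r (cB (f a)) + k (cX (q a)))) + cB (f a) := by rw [← e5]
          _ = cB (f a) + h (cX (q a)) := C _ _
      · intro x
        show h (q (k x)) + f (k x) = h x
        rw [hker, add_zero, qk]
      · intro b
        show h (q (r b)) + f (r b) = b
        rw [hfr, qr, hh0, zero_add]
  · rintro th ⟨thadd, th0, thc, thk, thr⟩ a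
    calc th a = th (k (q a) + r (f a)) := by rw [← hq1]
      _ = h (q a) + f a := by rw [thadd, thk, thr]
end

section
/- With notation as in the setup, if a map $\tilde h: A\to B$ satisfies $\tilde h(a)=h(q(a))+f(a)$ for all $a$ and is additive, then it automatically preserves conjugation: $\tilde h(\overline{a}) = \overline{\tilde h(a)}$ for all $a\in A$. -/
theorem induced_morphism_preserves_conjugation
    {X A B : Type*} [AddCancelMonoid X] [AddCancelMonoid A] [AddCancelMonoid B]
    (cX : X → X) (cA : A → A) (cB : B → B)
    (hX1 : ∀ x : X, cX x + x = x + cX x)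
    (hX2 : ∀ x y : X, x + cX y + y = y + cX y + x)
    (hX3 : ∀ x y : X, cX (x + y) = cX y + cX x)
    (hA1 : ∀ a : A, cA a + a = a + cA a)
    (hA2 : ∀ a a' : A, a + cA a' + a' = a' + cA a' + a)
    (hA3 : ∀ a a' : A, cA (a + a') = cA a' + cA a)
    (hB1 : ∀ b : B, cB b + b = b + cB b)
    (hB2 : ∀ b b' : B, b + cB b' + b' = b' + cB b' + b)
    (hB3 : ∀ b b' : B, cB (b + b') = cB b' + cB b)
    (f : A → B) (r : B → A) (k : X → A) (q : A → X)
    (hfadd : ∀ a a' : A, f (a + a') = f a + f a') (hf0 : f 0 = 0)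
    (hfc : ∀ a : A, f (cA a) = cB (f a))
    (hradd : ∀ b b' : B, r (b + b') = r b + r b') (hr0 : r 0 = 0)
    (hrc : ∀ b : B, r (cB b) = cA (r b))
    (hkadd : ∀ x x' : X, k (x + x') = k x + k x') (hk0 : k 0 = 0)
    (hkc : ∀ x : X, k (cX x) = cA (k x))
    (hfr : ∀ b : B, f (r b) = b)
    (hkinj : Function.Injective k)
    (hker : ∀ x : X, f (k x) = 0)
    (hker' : ∀ a : A, f a = 0 → ∃ x : X, k x = a)
    (hq1 : ∀ a : A, a = k (q a) + r (f a))
    (hq2 : ∀ (x : X) (b : B), x = q (k x + r b))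
    (h : X → B)
    (hhadd : ∀ x x' : X, h (x + x') = h x + h x') (hh0 : h 0 = 0)
    (hhc : ∀ x : X, h (cX x) = cB (h x))
    (th : A → B)
    (hthdef : ∀ a : A, th a = h (q a) + f a)
    (hthadd : ∀ a a' : A, th (a + a') = th a + th a') :
    ∀ a : A, th (cA a) = cB (th a) := by
  intro a
  have hqk : ∀ x : X, q (k x) = x := by
    intro x
    have := hq2 x 0
    rw [hr0, add_zero] at this
    exact this.symm
  have hqr : ∀ b : B, q (r b) = 0 := by
    intro b
    have := hq2 0 b
    rw [hk0, zero_add] at this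
    exact this.symm
  have hthk : ∀ x : X, th (k x) = h x := by
    intro x; rw [hthdef, hqk, hker, add_zero]
  have hthr : ∀ b : B, th (r b) = b := by
    intro b; rw [hthdef, hqr, hh0, zero_add, hfr]
  have ha : cA a = r (cB (f a)) + k (cX (q a)) := by
    conv_lhs => rw [hq1 a]
    rw [hA3, ← hrc, ← hkc]
  rw [ha, hthadd, hthr, hthk, hhc, hthdef a, hB3]
end

section
/- Let $f:A\to B$ with section $r$, kernel $k:X\to A$, Schreier retraction $q$, be a Schreier split epimorphism of cancellative conjugation monoids, $h:X\to B$ a morphism satisfying $h(b\cdot x)+b=b+h(x)$ for all $b,x$, and $\tilde h(a)=h(q(a))+f(a)$. Then the following are equivalent: (i) $h(y)\cdot x + y = y + x$ for all $x,y\in X$; (ii) $k(\tilde h(a)\cdot x)+a = a+k(x)$ for all $a\in A$, $x\in X$. -/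
theorem crossed_semimodule_condition_equiv
    {X A B : Type*} [AddCancelMonoid X] [AddCancelMonoid A] [AddCancelMonoid B]
    (cX : X → X) (cA : A → A) (cB : B → B)
    (hX1 : ∀ x : X, cX x + x = x + cX x)
    (hX2 : ∀ x y : X, x + cX y + y = y + cX y + x)
    (hX3 : ∀ x y : X, cX (x + y) = cX y + cX x)
    (hA1 : ∀ a : A, cA a + a = a + cA a)
    (hA2 : ∀ a a' : A, a + cA a' + a' = a' + cA a' + a)
    (hA3 : ∀ a a' : A, cA (a + a') = cA a' + cA a)
    (hB1 : ∀ b : B, cB b + b = b + cB b)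
    (hB2 : ∀ b b' : B, b + cB b' + b' = b' + cB b' + b)
    (hB3 : ∀ b b' : B, cB (b + b') = cB b' + cB b)
    (f : A → B) (r : B → A) (k : X → A) (q : A → X)
    (hfadd : ∀ a a' : A, f (a + a') = f a + f a') (hf0 : f 0 = 0)
    (hfc : ∀ a : A, f (cA a) = cB (f a))
    (hradd : ∀ b b' : B, r (b + b') = r b + r b') (hr0 : r 0 = 0)
    (hrc : ∀ b : B, r (cB b) = cA (r b))
    (hkadd : ∀ x x' : X, k (x + x') = k x + k x') (hk0 : k 0 = 0)
    (hkc : ∀ x : X, k (cX x) = cA (k x))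
    (hfr : ∀ b : B, f (r b) = b)
    (hkinj : Function.Injective k)
    (hker : ∀ x : X, f (k x) = 0)
    (hker' : ∀ a : A, f a = 0 → ∃ x : X, k x = a)
    (hq1 : ∀ a : A, a = k (q a) + r (f a))
    (hq2 : ∀ (x : X) (b : B), x = q (k x + r b))
    (h : X → B)
    (hhadd : ∀ x x' : X, h (x + x') = h x + h x') (hh0 : h 0 = 0)
    (hhc : ∀ x : X, h (cX x) = cB (h x))
    (hC1 : ∀ (b : B) (x : X), h (q (r b + k x)) + b = b + h x) :
    (∀ x y : X, q (r (h y) + k x) + y = y + x) ↔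
      (∀ (a : A) (x : X), k (q (r (h (q a) + f a) + k x)) + a = a + k x) := by
  have hAux : ∀ (b : B) (x : X), k (q (r b + k x)) + r b = r b + k x := by
    intro b x
    have h1 := hq1 (r b + k x)
    rw [hfadd, hfr, hker, add_zero] at h1
    exact h1.symm
  have Bq : ∀ (a : A) (b : B), q (a + r b) = q a := by
    intro a b
    have h1 : a + r b = k (q a) + r (f a + b) := by
      rw [hradd, ← add_assoc, ← hq1]
    rw [h1]; exact (hq2 (q a) (f a + b)).symm
  have Cq : ∀ y : X, q (k y) = y := by
    intro y
    have h1 := hq2 y 0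
    rw [hr0, add_zero] at h1
    exact h1.symm
  constructor
  · intro hi a x
    set x' := q (r (f a) + k x) with hx'
    have e1 : r (f a) + k x = k x' + r (f a) := (hAux (f a) x).symm
    have e3 : q (r (h (q a) + f a) + k x) = q (r (h (q a)) + k x') := by
      rw [hradd, add_assoc, e1, ← add_assoc, Bq]
    calc k (q (r (h (q a) + f a) + k x)) + a
        = k (q (r (h (q a)) + k x')) + (k (q a) + r (f a)) := by rw [e3, ← hq1]
      _ = k (q (r (h (q a)) + k x') + q a) + r (f a) := by rw [hkadd, add_assoc]
      _ = k (q a + x') + r (f a) := by rw [hi x' (q a)]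
      _ = k (q a) + (k x' + r (f a)) := by rw [hkadd, add_assoc]
      _ = k (q a) + (r (f a) + k x) := by rw [← e1]
      _ = a + k x := by rw [← add_assoc, ← hq1]
  · intro hii x y
    have h1 := hii (k y) x
    rw [Cq, hker, add_zero] at h1
    apply hkinj
    rw [hkadd, hkadd, h1]
end

section
/- Under conditions $h(b\cdot x)+b=b+h(x)$ and $h(y)\cdot x+y=y+x$, the multiplication map $m: A\times_B A\to A$ defined on the pullback $\{(a,a') : f(a)=\tilde h(a')\}$ by $m(a,a')=k(q(a))+a'$ is a monoid homomorphism which moreover preserves conjugation: $m(\overline{a},\overline{a'}) = \overline{m(a,a')}$. -/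
theorem multiplication_is_morphism
    {X A B : Type*} [AddCancelMonoid X] [AddCancelMonoid A] [AddCancelMonoid B]
    (cX : X → X) (cA : A → A) (cB : B → B)
    (hX1 : ∀ x : X, cX x + x = x + cX x)
    (hX2 : ∀ x y : X, x + cX y + y = y + cX y + x)
    (hX3 : ∀ x y : X, cX (x + y) = cX y + cX x)
    (hA1 : ∀ a : A, cA a + a = a + cA a)
    (hA2 : ∀ a a' : A, a + cA a' + a' = a' + cA a' + a)
    (hA3 : ∀ a a' : A, cA (a + a') = cA a' + cA a)
    (hB1 : ∀ b : B, cB b + b = b + cB b)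
    (hB2 : ∀ b b' : B, b + cB b' + b' = b' + cB b' + b)
    (hB3 : ∀ b b' : B, cB (b + b') = cB b' + cB b)
    (f : A → B) (r : B → A) (k : X → A) (q : A → X)
    (hfadd : ∀ a a' : A, f (a + a') = f a + f a') (hf0 : f 0 = 0)
    (hfc : ∀ a : A, f (cA a) = cB (f a))
    (hradd : ∀ b b' : B, r (b + b') = r b + r b') (hr0 : r 0 = 0)
    (hrc : ∀ b : B, r (cB b) = cA (r b))
    (hkadd : ∀ x x' : X, k (x + x') = k x + k x') (hk0 : k 0 = 0)
    (hkc : ∀ x : X, k (cX x) = cA (k x))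
    (hfr : ∀ b : B, f (r b) = b)
    (hkinj : Function.Injective k)
    (hker : ∀ x : X, f (k x) = 0)
    (hker' : ∀ a : A, f a = 0 → ∃ x : X, k x = a)
    (hq1 : ∀ a : A, a = k (q a) + r (f a))
    (hq2 : ∀ (x : X) (b : B), x = q (k x + r b))
    (h : X → B)
    (hhadd : ∀ x x' : X, h (x + x') = h x + h x') (hh0 : h 0 = 0)
    (hhc : ∀ x : X, h (cX x) = cB (h x))
    (hC1 : ∀ (b : B) (x : X), h (q (r b + k x)) + b = b + h x)
    (hC2 : ∀ x y : X, q (r (h y) + k x) + y = y + x) :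
    (∀ a1 a1' a2 a2' : A,
        f a1 = h (q a1') + f a1' → f a2 = h (q a2') + f a2' →
        k (q (a1 + a2)) + (a1' + a2') = (k (q a1) + a1') + (k (q a2) + a2')) ∧
    (k (q (0 : A)) + (0 : A) = 0) ∧
    (∀ a a' : A, f a = h (q a') + f a' →
        k (q (cA a)) + cA a' = cA (k (q a) + a')) := by

  -- swap lemma: r b + k x = k (q (r b + k x)) + r b
  have swap : ∀ (b : B) (x : X), r b + k x = k (q (r b + k x)) + r b := by
    intro b x
    have := hq1 (r b + k x)
    rwa [hfadd, hfr, hker, add_zero] at this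
  -- key lemma
  have key : ∀ (a' : A) (x : X),
      k (q (r (h (q a') + f a') + k x)) + a' = a' + k x := by
    intro a' x
    set y := q a' with hy
    set b' := f a' with hb'
    set z := q (r b' + k x) with hz
    set w := q (r (h y) + k z) with hw
    have e1 : r b' + k x = k z + r b' := swap b' x
    have e2 : r (h y) + k z = k w + r (h y) := swap (h y) z
    have comp : r (h y + b') + k x = k w + r (h y + b') := by
      rw [hradd, add_assoc, e1, ← add_assoc, e2, add_assoc, ← hradd]
    have qcomp : q (r (h y + b') + k x) = w := by
      rw [comp]; exact (hq2 w (h y + b')).symm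
    have hwz : w + y = y + z := hC2 z y
    calc k (q (r (h y + b') + k x)) + a'
        = k w + (k y + r b') := by rw [qcomp, ← hq1 a']
      _ = k (w + y) + r b' := by rw [hkadd, add_assoc]
      _ = k (y + z) + r b' := by rw [hwz]
      _ = k y + (k z + r b') := by rw [hkadd, add_assoc]
      _ = k y + (r b' + k x) := by rw [← e1]
      _ = a' + k x := by rw [← add_assoc, ← hq1 a']
  refine ⟨?_, ?_, ?_⟩
  · intro a1 a1' a2 a2' h1 h2
    set x1 := q a1 with hx1
    set x2 := q a2 with hx2
    set b1 := f a1 with hb1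
    set b2 := f a2 with hb2
    set u := q (r b1 + k x2) with hu
    have d1 : a1 = k x1 + r b1 := hq1 a1
    have d2 : a2 = k x2 + r b2 := hq1 a2
    have e1 : r b1 + k x2 = k u + r b1 := swap b1 x2
    have comp : a1 + a2 = k (x1 + u) + r (b1 + b2) := by
      rw [d1, d2, add_assoc, ← add_assoc (r b1), e1, hkadd, hradd]
      simp [add_assoc]
    have qc : q (a1 + a2) = x1 + u := by
      rw [comp]; exact (hq2 (x1 + u) (b1 + b2)).symm
    have hk2 : k u + a1' = a1' + k x2 := by
      have := key a1' x2
      rwa [← h1] at this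
    calc k (q (a1 + a2)) + (a1' + a2')
        = k x1 + (k u + a1') + a2' := by rw [qc, hkadd]; simp [add_assoc]
      _ = k x1 + (a1' + k x2) + a2' := by rw [hk2]
      _ = k x1 + a1' + (k x2 + a2') := by simp [add_assoc]
  · have : q (0 : A) = 0 := by
      have := hq2 0 0
      rw [hk0, hr0, add_zero] at this
      exact this.symm
    rw [this, hk0, add_zero]
  · intro a a' hyp
    set x := q a with hx
    set y := q a' with hy
    set b := f a with hb
    set b' := f a' with hb'
    have d : a = k x + r b := hq1 a
    have d' : a' = k y + r b' := hq1 a'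
    have dc : cA a = r (cB b) + k (cX x) := by
      rw [d, hA3, hrc, hkc]
    have dc' : cA a' = r (cB b') + k (cX y) := by
      rw [d', hA3, hrc, hkc]
    set w := q (r (cB b') + k (cX y)) with hw
    have swc' : cA a' = k w + r (cB b') := by rw [dc']; exact swap (cB b') (cX y)
    have qca' : q (cA a') = w := by
      rw [swc']; exact (hq2 w (cB b')).symm
    have fca' : f (cA a') = cB b' := by rw [hfc]
    have hbform : cB b = h (q (cA a')) + f (cA a') := by
      rw [qca', fca', hyp, hB3, ← hhc]
      have := hC1 (cB b') (cX y)
      rw [← hw] at this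
      exact this.symm
    have qca : q (cA a) = q (r (cB b) + k (cX x)) := by
      rw [dc]
    have keyc := key (cA a') (cX x)
    rw [← hbform] at keyc
    calc k (q (cA a)) + cA a'
        = k (q (r (cB b) + k (cX x))) + cA a' := by rw [qca]
      _ = cA a' + k (cX x) := keyc
      _ = cA a' + cA (k x) := by rw [hkc]
      _ = cA (k x + a') := by rw [hA3]
end
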